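/- For every bounded finite counting message passing automaton (k-FCMPA) over Π, there is an equivalent GMSC program over Π whose size is polynomial in the size of the automaton; the program has one head predicate X_q per state q, terminal clauses encoding the initialization function via Boolean combinations of node labels, and iteration clauses encoding the transition function via graded modalities ◇_{=n} and ◇_{≥k}, such that for every finite pointed Π-labeled graph (G, w) and every n ∈ ℕ: G, w ⊨ X_qⁿ iff w is in state q at round n of the automaton. -/

import Mathlib

/-- A finite directed node-labeled graph: finite node set `V`, out-neighbour
finsets `adj v`, and a labeling of nodes by sets of node label symbols from `α`. -/
structure LGraph (α : Type) : Type 1 where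
  V : Type
  fintypeV : Fintype V
  adj : V → Finset V
  label : V → Set α

attribute [instance] LGraph.fintypeV

/-- Formulas of graded modal logic GML over node label symbols `α`:
`⊤`, labels, negation, conjunction, and graded diamonds `◇_{≥k}`. -/
inductive GML (α : Type) : Type where
  | top : GML α
  | lab : α → GML α
  | neg : GML α → GML α
  | and : GML α → GML α → GML α
  | dia : ℕ → GML α → GML α

/-- Truth of a GML formula at a node of a labeled graph; `dia k φ` (`◇_{≥k}φ`)
holds iff at least `k` out-neighbours satisfy `φ`. -/
def GML.sat {α : Type} (G : LGraph α) : GML α → G.V → Prop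
  | .top, _ => True
  | .lab p, v => p ∈ G.label v
  | .neg φ, v => ¬ GML.sat G φ v
  | .and φ ψ, v => GML.sat G φ v ∧ GML.sat G ψ v
  | .dia k φ, v => ∃ s : Finset G.V, s ⊆ G.adj v ∧ k ≤ s.card ∧ ∀ u ∈ s, GML.sat G φ u

/-- `⊥` as a GML formula. -/
def GML.bot {α : Type} : GML α := .neg .top

/-- `□φ := ¬◇_{≥1}¬φ`. -/
def GML.box {α : Type} (φ : GML α) : GML α := .neg (.dia 1 (.neg φ))

/-- `◇_{=n}φ := ◇_{≥n}φ ∧ ¬◇_{≥n+1}φ`. -/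
def GML.diaEq {α : Type} (n : ℕ) (φ : GML α) : GML α := .and (.dia n φ) (.neg (.dia (n + 1) φ))

/-- Schemata of GMSC over node label symbols `α` and head predicates (schema variables) `ν`. -/
inductive Schema (α ν : Type) : Type where
  | top : Schema α ν
  | lab : α → Schema α ν
  | var : ν → Schema α ν
  | neg : Schema α ν → Schema α ν
  | and : Schema α ν → Schema α ν → Schema α ν
  | dia : ℕ → Schema α ν → Schema α ν

/-- Substituting a GML formula for each head predicate of a schema. -/
def Schema.subst {α ν : Type} (σ : ν → GML α) : Schema α ν → GML α
  | .top => .top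
  | .lab p => .lab p
  | .var X => σ X
  | .neg φ => .neg (φ.subst σ)
  | .and φ ψ => .and (φ.subst σ) (ψ.subst σ)
  | .dia k φ => .dia k (φ.subst σ)

/-- A GMSC program over node label symbols `α` with head predicates `ν`:
terminal clauses `X(0) :− term X`, iteration clauses `X :− iter X`, and a set
`app` of appointed predicates. -/
structure Program (α ν : Type) where
  term : ν → GML α
  iter : ν → Schema α ν
  app : Set ν

/-- The `n`-th iteration formula `Xⁿ` of a head predicate `X`: `X⁰` is the terminal body,
and `X^{n+1}` is the iteration body with each head predicate `Y` replaced by `Yⁿ`. -/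
def Program.iterFormula {α ν : Type} (P : Program α ν) : ℕ → ν → GML α
  | 0 => P.term
  | n + 1 => fun X => (P.iter X).subst (P.iterFormula n)

/-- The program accepts `(G, w)` iff some appointed predicate's iteration formula is
true at `w` in some round. -/
def Program.accepts {α ν : Type} (P : Program α ν) (G : LGraph α) (w : G.V) : Prop :=
  ∃ X ∈ P.app, ∃ n : ℕ, GML.sat G (P.iterFormula n X) w

/-- A counting message passing automaton (CMPA) over node label symbols `α` with state
set `Q`: an initialization function from label sets to states, a transition function taking
the current state and the multiset of out-neighbour states, and accepting states `F`. -/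
structure CMPA (α Q : Type) where
  init : Set α → Q
  trans : Q → Multiset Q → Q
  F : Set Q

/-- The state of a node at each round: round 0 is given by the initialization function on
the node's labels, and round `n+1` applies the transition function to the node's round-`n`
state and the multiset of round-`n` states of its out-neighbours. -/
def CMPA.state {α Q : Type} (A : CMPA α Q) (G : LGraph α) : ℕ → G.V → Q
  | 0, v => A.init (G.label v)
  | n + 1, v => A.trans (A.state G n v) ((G.adj v).val.map (A.state G n))

/-- The CMPA accepts `(G, w)` iff `w` visits an accepting state at some round. -/
def CMPA.accepts {α Q : Type} (A : CMPA α Q) (G : LGraph α) (w : G.V) : Prop :=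
  ∃ n : ℕ, A.state G n w ∈ A.F

/-- The `k`-projection of a multiset: every multiplicity is capped at `k`. -/
noncomputable def capProj {β : Type*} (k : ℕ) (M : Multiset β) : Multiset β :=
  letI := Classical.decEq β
  M.toFinset.val.bind fun a => Multiset.replicate (min k (M.count a)) a

/-- The size of a GML formula: occurrences of label symbols and logical operators,
with each diamond `◇_{≥k}` contributing `k`. -/
def GML.gsize {α : Type} : GML α → ℕ
  | .top => 1
  | .lab _ => 1
  | .neg φ => φ.gsize + 1
  | .and φ ψ => φ.gsize + ψ.gsize + 1
  | .dia k φ => φ.gsize + k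

/-- The size of a GMSC schema, analogously. -/
def Schema.gsize {α ν : Type} : Schema α ν → ℕ
  | .top => 1
  | .lab _ => 1
  | .var _ => 1
  | .neg φ => φ.gsize + 1
  | .and φ ψ => φ.gsize + ψ.gsize + 1
  | .dia k φ => φ.gsize + k

/-- The size of a GMSC program: the size of the label alphabet plus the sizes of all
terminal and iteration clause bodies. -/
def progSize {α ν : Type} [Fintype α] [Fintype ν] (P : Program α ν) : ℕ :=
  Fintype.card α + ∑ X : ν, ((P.term X).gsize + (P.iter X).gsize)

/-! ### Auxiliary machinery for Statement 10 -/

open scoped Classical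

noncomputable section AuxGMSC

variable {α ν Q : Type}

/-- Disjunction of GML formulas. -/
def GOr (φ ψ : GML α) : GML α := .neg (.and (.neg φ) (.neg ψ))

/-- Big conjunction of a list of GML formulas. -/
def gBigAnd : List (GML α) → GML α
  | [] => .top
  | φ :: l => .and φ (gBigAnd l)

/-- Big disjunction of a list of GML formulas. -/
def gBigOr : List (GML α) → GML α
  | [] => .neg .top
  | φ :: l => GOr φ (gBigOr l)

/-- Disjunction of schemata. -/
def SOr (φ ψ : Schema α ν) : Schema α ν := .neg (.and (.neg φ) (.neg ψ))

/-- Big conjunction of a list of schemata. -/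
def sBigAnd : List (Schema α ν) → Schema α ν
  | [] => .top
  | φ :: l => .and φ (sBigAnd l)

/-- Big disjunction of a list of schemata. -/
def sBigOr : List (Schema α ν) → Schema α ν
  | [] => .neg .top
  | φ :: l => SOr φ (sBigOr l)

lemma sat_GOr {G : LGraph α} {φ ψ : GML α} {v : G.V} :
    GML.sat G (GOr φ ψ) v ↔ GML.sat G φ v ∨ GML.sat G ψ v := by
  simp only [GOr, GML.sat]; tauto

lemma sat_gBigAnd {G : LGraph α} {v : G.V} (l : List (GML α)) :
    GML.sat G (gBigAnd l) v ↔ ∀ φ ∈ l, GML.sat G φ v := by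
  induction l with
  | nil => simp [gBigAnd, GML.sat]
  | cons φ l ih => simp [gBigAnd, GML.sat, ih]

lemma sat_gBigOr {G : LGraph α} {v : G.V} (l : List (GML α)) :
    GML.sat G (gBigOr l) v ↔ ∃ φ ∈ l, GML.sat G φ v := by
  induction l with
  | nil => simp [gBigOr, GML.sat]
  | cons φ l ih => simp [gBigOr, sat_GOr, ih]

lemma subst_sBigAnd (σ : ν → GML α) (l : List (Schema α ν)) :
    (sBigAnd l).subst σ = gBigAnd (l.map (Schema.subst σ)) := by
  induction l with
  | nil => rfl
  | cons φ l ih => simp [sBigAnd, gBigAnd, Schema.subst, ih]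

lemma subst_sBigOr (σ : ν → GML α) (l : List (Schema α ν)) :
    (sBigOr l).subst σ = gBigOr (l.map (Schema.subst σ)) := by
  induction l with
  | nil => rfl
  | cons φ l ih => simp [sBigOr, gBigOr, SOr, GOr, Schema.subst, ih]

/-- Semantics of the graded diamond via cardinality of the satisfying neighbours. -/
lemma sat_dia {G : LGraph α} {k : ℕ} {φ : GML α} {v : G.V} :
    GML.sat G (.dia k φ) v ↔ k ≤ ((G.adj v).filter fun u => GML.sat G φ u).card := by
  constructor
  · rintro ⟨s, hs, hk, hsat⟩
    exact hk.trans (Finset.card_le_card fun u hu => Finset.mem_filter.mpr ⟨hs hu, hsat u hu⟩)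
  · intro h
    exact ⟨_, Finset.filter_subset _ _, h, fun u hu => (Finset.mem_filter.mp hu).2⟩

section Defs

variable [Fintype α] [Fintype Q]

/-- A GML formula characterizing the nodes whose label set is exactly `S`. -/
def labelForm (S : Finset α) : GML α :=
  gBigAnd ((Finset.univ : Finset α).toList.map
    fun p => if p ∈ S then GML.lab p else .neg (.lab p))

/-- Terminal clause body for state `q`. -/
def termF (A : CMPA α Q) (q : Q) : GML α :=
  gBigOr (((Finset.univ : Finset (Finset α)).filter
      fun S : Finset α => A.init (↑S : Set α) = q).toList.map labelForm)

/-- The multiset over `Q` with multiplicities given by `g`. -/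
def mfun (g : Q → ℕ) : Multiset Q :=
  (Finset.univ : Finset Q).val.bind fun p => Multiset.replicate (g p) p

/-- Schema expressing that the capped number of neighbours in state `p` is `m`. -/
def cntSch (k : ℕ) (p : Q) (m : ℕ) : Schema α Q :=
  if m < k then .and (.dia m (.var p)) (.neg (.dia (m + 1) (.var p))) else .dia k (.var p)

/-- Schema expressing a full transition configuration `pf`. -/
def bodySch (k : ℕ) (pf : Q × (Q → Fin (k + 1))) : Schema α Q :=
  .and (.var pf.1)
    (sBigAnd ((Finset.univ : Finset Q).toList.map fun p => cntSch k p (pf.2 p)))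

/-- Iteration clause body for state `q`. -/
def iterSch (A : CMPA α Q) (k : ℕ) (q : Q) : Schema α Q :=
  sBigOr (((Finset.univ : Finset (Q × (Q → Fin (k + 1)))).filter
      fun pf => A.trans pf.1 (mfun fun p => (pf.2 p : ℕ)) = q).toList.map (bodySch k))

/-- The GMSC program equivalent to a `k`-bounded CMPA. -/
def buildProg (A : CMPA α Q) (k : ℕ) : Program α Q := ⟨termF A, iterSch A k, A.F⟩

end Defs

lemma count_mfun [Fintype Q] [DecidableEq Q] (g : Q → ℕ) (a : Q) :
    (mfun g).count a = g a := by
  simp only [mfun, Multiset.count_bind]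
  rw [show ((Finset.univ : Finset Q).val.map
        fun p => (Multiset.replicate (g p) p).count a).sum
      = ∑ p : Q, if p = a then g p else 0 from by
    rw [Finset.sum]
    congr 1
    exact Multiset.map_congr rfl fun p _ => by rw [Multiset.count_replicate]]
  simp

lemma decEq_eq (i1 i2 : DecidableEq Q) : i1 = i2 := by
  funext a b
  exact Subsingleton.elim _ _

lemma capProj_eq_mfun [Fintype Q] [DecidableEq Q] (k : ℕ) (M : Multiset Q) :
    capProj k M = mfun fun p => min k (M.count p) := by
  have hinst : (Classical.decEq Q) = ‹DecidableEq Q› := decEq_eq _ _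
  have hcap : capProj k M
      = M.toFinset.val.bind fun a => Multiset.replicate (min k (M.count a)) a := by
    unfold capProj
    rw [hinst]
  rw [hcap]
  ext a
  rw [count_mfun]
  simp only [Multiset.count_bind]
  rw [show (M.toFinset.val.map
        fun p => (Multiset.replicate (min k (M.count p)) p).count a).sum
      = ∑ p ∈ M.toFinset, if p = a then min k (M.count p) else 0 from by
    rw [Finset.sum]
    congr 1
    exact Multiset.map_congr rfl fun p _ => by rw [Multiset.count_replicate]]
  rw [Finset.sum_ite_eq']
  by_cases h : a ∈ M.toFinset
  · simp [h]
  · simp only [h, if_false]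
    rw [show M.count a = 0 from Multiset.count_eq_zero.mpr (by simpa using h)]
    simp

lemma sat_labelForm [Fintype α] {G : LGraph α} {v : G.V} (S : Finset α) :
    GML.sat G (labelForm S) v ↔ (↑S : Set α) = G.label v := by
  rw [labelForm, sat_gBigAnd]
  simp only [List.mem_map, Finset.mem_toList, Finset.mem_univ, true_and]
  constructor
  · intro h
    ext p
    have := h _ ⟨p, rfl⟩
    by_cases hp : p ∈ S
    · simp only [hp, if_true, GML.sat] at this
      simpa [hp] using this
    · simp only [hp, if_false, GML.sat] at this
      simp [hp, this]
  · rintro h φ ⟨p, rfl⟩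
    by_cases hp : p ∈ S
    · have : p ∈ G.label v := by rw [← h]; simpa using hp
      simpa [hp, GML.sat] using this
    · have : p ∉ G.label v := by rw [← h]; simpa using hp
      simpa [hp, GML.sat] using this

lemma card_filter_sat_eq_count [Fintype Q] {G : LGraph α} {v : G.V}
    (F : Q → GML α) (st : G.V → Q) (hF : ∀ p u, GML.sat G (F p) u ↔ st u = p) (p : Q) :
    ((G.adj v).filter fun u => GML.sat G (F p) u).card
      = Multiset.count p ((G.adj v).val.map st) := by
  classical
  rw [Multiset.count_map]
  rw [show ((G.adj v).filter fun u => GML.sat G (F p) u)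
      = (G.adj v).filter fun u => p = st u from by
    ext u; simp [Finset.mem_filter, hF, eq_comm]]
  rw [Finset.card_def, Finset.filter_val]

lemma sat_cntSch_subst [Fintype Q] {G : LGraph α} {v : G.V}
    (F : Q → GML α) (st : G.V → Q) (hF : ∀ p u, GML.sat G (F p) u ↔ st u = p)
    (k : ℕ) (p : Q) (m : ℕ) (hm : m ≤ k) :
    GML.sat G ((cntSch (α := α) k p m).subst F) v
      ↔ min k (Multiset.count p ((G.adj v).val.map st)) = m := by
  have hc := card_filter_sat_eq_count (v := v) F st hF p
  by_cases hmk : m < k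
  · simp only [cntSch, if_pos hmk, Schema.subst]
    show GML.sat G (.dia m (F p)) v ∧ ¬ GML.sat G (.dia (m + 1) (F p)) v ↔ _
    rw [sat_dia, sat_dia, hc]
    omega
  · simp only [cntSch, if_neg hmk, Schema.subst]
    rw [sat_dia, hc]
    omega

lemma sat_iterFormula [Fintype α] [Fintype Q] (k : ℕ) (A : CMPA α Q)
    (hb : ∀ (q : Q) (M : Multiset Q), A.trans q M = A.trans q (capProj k M))
    (G : LGraph α) (n : ℕ) (q : Q) (w : G.V) :
    GML.sat G ((buildProg A k).iterFormula n q) w ↔ A.state G n w = q := by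
  classical
  induction n generalizing q w with
  | zero =>
    show GML.sat G (termF A q) w ↔ _
    rw [termF, sat_gBigOr, CMPA.state]
    simp only [List.mem_map, Finset.mem_toList, Finset.mem_filter, Finset.mem_univ, true_and]
    constructor
    · rintro ⟨φ, ⟨S, hS, rfl⟩, hsat⟩
      rw [sat_labelForm] at hsat
      rw [← hsat, hS]
    · intro h
      refine ⟨labelForm (G.label w).toFinset, ⟨(G.label w).toFinset, ?_, rfl⟩, ?_⟩
      · rw [Set.coe_toFinset]; exact h
      · rw [sat_labelForm, Set.coe_toFinset]
  | succ n ih =>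
    show GML.sat G ((iterSch A k q).subst _) w ↔ _
    set st : G.V → Q := A.state G n with hst
    set M : Multiset Q := (G.adj w).val.map st with hM
    have hF : ∀ p u, GML.sat G ((buildProg A k).iterFormula n p) u ↔ st u = p :=
      fun p u => ih p u
    rw [iterSch, subst_sBigOr, List.map_map, sat_gBigOr]
    simp only [List.mem_map, Finset.mem_toList, Finset.mem_filter, Finset.mem_univ, true_and,
      Function.comp]
    have hbody : ∀ pf : Q × (Q → Fin (k + 1)),
        GML.sat G ((bodySch (α := α) k pf).subst ((buildProg A k).iterFormula n)) w
          ↔ st w = pf.1 ∧ ∀ p : Q, min k (M.count p) = (pf.2 p : ℕ) := by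
      intro pf
      simp only [bodySch, Schema.subst, GML.sat, subst_sBigAnd, List.map_map]
      rw [sat_gBigAnd, hF]
      simp only [List.mem_map, Finset.mem_toList, Finset.mem_univ, true_and, Function.comp]
      constructor
      · rintro ⟨h1, h2⟩
        refine ⟨h1, fun p => ?_⟩
        have := h2 _ ⟨p, rfl⟩
        rwa [sat_cntSch_subst _ st hF k p _ (Nat.lt_succ_iff.mp (pf.2 p).isLt)] at this
      · rintro ⟨h1, h2⟩
        refine ⟨h1, ?_⟩
        rintro φ ⟨p, rfl⟩
        rw [sat_cntSch_subst _ st hF k p _ (Nat.lt_succ_iff.mp (pf.2 p).isLt)]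
        exact h2 p
    have htrans : A.state G (n + 1) w = A.trans (st w) (mfun fun p => min k (M.count p)) := by
      rw [CMPA.state, hb, capProj_eq_mfun]
    constructor
    · rintro ⟨φ, ⟨pf, hpf, rfl⟩, hsat⟩
      rw [hbody] at hsat
      obtain ⟨h1, h2⟩ := hsat
      rw [htrans, h1]
      rw [show (mfun fun p => min k (M.count p)) = mfun fun p => (pf.2 p : ℕ) from by
        congr 1; funext p; exact h2 p]
      exact hpf
    · intro h
      refine ⟨_, ⟨(st w, fun p => ⟨min k (M.count p), by omega⟩), ?_, rfl⟩, ?_⟩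
      · rw [← htrans]; exact h
      · rw [hbody]
        exact ⟨rfl, fun p => rfl⟩

/-! ### Size bounds -/

lemma gsize_GOr (φ ψ : GML α) : (GOr φ ψ).gsize = φ.gsize + ψ.gsize + 4 := by
  simp [GOr, GML.gsize]; ring

lemma gsize_gBigAnd (l : List (GML α)) (b : ℕ) (h : ∀ φ ∈ l, φ.gsize ≤ b) :
    (gBigAnd l).gsize ≤ 1 + l.length * (b + 1) := by
  induction l with
  | nil => simp [gBigAnd, GML.gsize]
  | cons φ l ih =>
    have h1 := h φ List.mem_cons_self
    have h2 := ih fun ψ hψ => h ψ (List.mem_cons_of_mem _ hψ)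
    simp only [gBigAnd, GML.gsize, List.length_cons]
    have : (l.length + 1) * (b + 1) = l.length * (b + 1) + b + 1 := by ring
    omega

lemma gsize_gBigOr (l : List (GML α)) (b : ℕ) (h : ∀ φ ∈ l, φ.gsize ≤ b) :
    (gBigOr l).gsize ≤ 2 + l.length * (b + 4) := by
  induction l with
  | nil => simp [gBigOr, GML.gsize]
  | cons φ l ih =>
    have h1 := h φ List.mem_cons_self
    have h2 := ih fun ψ hψ => h ψ (List.mem_cons_of_mem _ hψ)
    simp only [gBigOr, List.length_cons, gsize_GOr]
    have : (l.length + 1) * (b + 4) = l.length * (b + 4) + b + 4 := by ring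
    omega

lemma gsize_sBigAnd (l : List (Schema α ν)) (b : ℕ) (h : ∀ φ ∈ l, φ.gsize ≤ b) :
    (sBigAnd l).gsize ≤ 1 + l.length * (b + 1) := by
  induction l with
  | nil => simp [sBigAnd, Schema.gsize]
  | cons φ l ih =>
    have h1 := h φ List.mem_cons_self
    have h2 := ih fun ψ hψ => h ψ (List.mem_cons_of_mem _ hψ)
    simp only [sBigAnd, Schema.gsize, List.length_cons]
    have : (l.length + 1) * (b + 1) = l.length * (b + 1) + b + 1 := by ring
    omega

lemma gsize_SOr (φ ψ : Schema α ν) : (SOr φ ψ).gsize = φ.gsize + ψ.gsize + 4 := by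
  simp [SOr, Schema.gsize]; ring

lemma gsize_sBigOr (l : List (Schema α ν)) (b : ℕ) (h : ∀ φ ∈ l, φ.gsize ≤ b) :
    (sBigOr l).gsize ≤ 2 + l.length * (b + 4) := by
  induction l with
  | nil => simp [sBigOr, Schema.gsize]
  | cons φ l ih =>
    have h1 := h φ List.mem_cons_self
    have h2 := ih fun ψ hψ => h ψ (List.mem_cons_of_mem _ hψ)
    simp only [sBigOr, List.length_cons, gsize_SOr]
    have : (l.length + 1) * (b + 4) = l.length * (b + 4) + b + 4 := by ring
    omega

lemma gsize_termF [Fintype α] [Fintype Q] (A : CMPA α Q) (q : Q) :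
    (termF A q).gsize ≤ 2 + 2 ^ Fintype.card α * (3 * Fintype.card α + 5) := by
  have hlab : ∀ S : Finset α, (labelForm S).gsize ≤ 1 + 3 * Fintype.card α := by
    intro S
    have := gsize_gBigAnd ((Finset.univ : Finset α).toList.map
        fun p => if p ∈ S then GML.lab p else .neg (.lab p)) 2 ?_
    · rw [List.length_map, Finset.length_toList, Finset.card_univ] at this
      calc (labelForm S).gsize ≤ 1 + Fintype.card α * (2 + 1) := this
        _ = 1 + 3 * Fintype.card α := by ring
    · intro φ hφ
      rw [List.mem_map] at hφ
      obtain ⟨p, -, rfl⟩ := hφ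
      by_cases hp : p ∈ S <;> simp [hp, GML.gsize]
  have hlen : (((Finset.univ : Finset (Finset α)).filter
      fun S : Finset α => A.init (↑S : Set α) = q).toList.map labelForm).length
        ≤ 2 ^ Fintype.card α := by
    rw [List.length_map, Finset.length_toList]
    calc _ ≤ (Finset.univ : Finset (Finset α)).card := Finset.card_filter_le _ _
      _ = 2 ^ Fintype.card α := by simp [Finset.card_univ, Fintype.card_finset]
  have hb := gsize_gBigOr (((Finset.univ : Finset (Finset α)).filter
      fun S : Finset α => A.init (↑S : Set α) = q).toList.map labelForm)
      (1 + 3 * Fintype.card α) ?_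
  · calc (termF A q).gsize ≤ 2 + _ * (1 + 3 * Fintype.card α + 4) := hb
      _ ≤ 2 + 2 ^ Fintype.card α * (1 + 3 * Fintype.card α + 4) := by gcongr
      _ = 2 + 2 ^ Fintype.card α * (3 * Fintype.card α + 5) := by ring
  · intro φ hφ
    rw [List.mem_map] at hφ
    obtain ⟨S, -, rfl⟩ := hφ
    exact hlab S

lemma gsize_cntSch [Fintype Q] (k : ℕ) (p : Q) (m : ℕ) (hm : m ≤ k) :
    (cntSch (α := α) k p m).gsize ≤ 2 * k + 5 := by
  by_cases hmk : m < k <;> simp [cntSch, hmk, Schema.gsize] <;> omega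

lemma gsize_iterSch [Fintype α] [Fintype Q] (A : CMPA α Q) (k : ℕ) (q : Q) :
    (iterSch A k q).gsize
      ≤ 2 + Fintype.card Q * (k + 1) ^ Fintype.card Q
          * (7 + Fintype.card Q * (2 * k + 6)) := by
  set m := Fintype.card Q with hmdef
  have hbody : ∀ pf : Q × (Q → Fin (k + 1)),
      (bodySch (α := α) k pf).gsize ≤ 3 + m * (2 * k + 6) := by
    intro pf
    have hin := gsize_sBigAnd ((Finset.univ : Finset Q).toList.map
        fun p => cntSch (α := α) k p (pf.2 p)) (2 * k + 5) ?_
    · rw [List.length_map, Finset.length_toList, Finset.card_univ, ← hmdef] at hin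
      simp only [bodySch, Schema.gsize]
      have hv : Schema.gsize (α := α) (Schema.var pf.1) = 1 := rfl
      have : m * (2 * k + 5 + 1) = m * (2 * k + 6) := by ring
      omega
    · intro φ hφ
      rw [List.mem_map] at hφ
      obtain ⟨p, -, rfl⟩ := hφ
      exact gsize_cntSch k p _ (Nat.lt_succ_iff.mp (pf.2 p).isLt)
  have hb := gsize_sBigOr (((Finset.univ : Finset (Q × (Q → Fin (k + 1)))).filter
      fun pf => A.trans pf.1 (mfun fun p => (pf.2 p : ℕ)) = q).toList.map
        (bodySch (α := α) k)) (3 + m * (2 * k + 6)) ?_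
  · have hlen : (((Finset.univ : Finset (Q × (Q → Fin (k + 1)))).filter
        fun pf => A.trans pf.1 (mfun fun p => (pf.2 p : ℕ)) = q).toList.map
          (bodySch (α := α) k)).length ≤ m * (k + 1) ^ m := by
      rw [List.length_map, Finset.length_toList]
      calc _ ≤ (Finset.univ : Finset (Q × (Q → Fin (k + 1)))).card :=
            Finset.card_filter_le _ _
        _ = m * (k + 1) ^ m := by
            classical
            simp [Finset.card_univ, Fintype.card_prod, Fintype.card_fun]
            rw [hmdef]
    calc (iterSch A k q).gsize ≤ 2 + _ * (3 + m * (2 * k + 6) + 4) := hb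
      _ ≤ 2 + m * (k + 1) ^ m * (3 + m * (2 * k + 6) + 4) := by gcongr
      _ = 2 + m * (k + 1) ^ m * (7 + m * (2 * k + 6)) := by ring
  · intro φ hφ
    rw [List.mem_map] at hφ
    obtain ⟨pf, -, rfl⟩ := hφ
    exact hbody pf

end AuxGMSC


/-- There is a uniform polynomial bound such that every `k`-bounded finite
CMPA (states `Q`, transition invariant under capping multiplicities at `k`) over a finite
alphabet `α` has an equivalent GMSC program over `α` with one head predicate per state, with
the states of `F` appointed, whose `n`-th iteration formula for `q` is true at `w` exactly
when the automaton is in state `q` at `w` at round `n`, and whose size is polynomial in the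
size `2^|α| + |Q|·(k+1)^|Q|` of the automaton (viewed as look-up tables). -/
theorem bounded_fcmpa_to_gmsc_polynomial :
    ∃ c : ℕ, ∀ (α : Type) [Fintype α] (Q : Type) [Fintype Q] (k : ℕ) (A : CMPA α Q),
      (∀ (q : Q) (M : Multiset Q), A.trans q M = A.trans q (capProj k M)) →
      ∃ P : Program α Q,
        P.app = A.F ∧
        (∀ (G : LGraph α) (w : G.V) (n : ℕ) (q : Q),
          GML.sat G (P.iterFormula n q) w ↔ A.state G n w = q) ∧
        progSize P ≤
          c * (2 ^ Fintype.card α + Fintype.card Q * (k + 1) ^ Fintype.card Q) ^ c := by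
  refine ⟨26, ?_⟩
  intro α _ Q _ k A hb
  classical
  refine ⟨buildProg A k, rfl, fun G w n q => sat_iterFormula k A hb G n q w, ?_⟩
  set a := Fintype.card α with ha
  set m := Fintype.card Q with hm
  set A2 := 2 ^ a with hA2
  set B := m * (k + 1) ^ m with hB
  set N := A2 + B with hN
  have haA2 : a + 1 ≤ A2 := Nat.lt_two_pow_self
  have hAN : A2 ≤ N := Nat.le_add_right _ _
  have hBN : B ≤ N := Nat.le_add_left _ _
  have hN1 : 1 ≤ N := le_trans (le_trans (by omega) haA2) hAN
  have hprog : progSize (buildProg A k)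
      = a + ∑ X : Q, ((termF A X).gsize + (iterSch A k X).gsize) := rfl
  by_cases hm0 : m = 0
  · haveI : IsEmpty Q := Fintype.card_eq_zero_iff.mp hm0
    rw [hprog, Finset.univ_eq_empty, Finset.sum_empty]
    have h2 : N ≤ N ^ 26 := Nat.le_self_pow (by norm_num) N
    calc a + 0 ≤ N := by omega
      _ ≤ N ^ 26 := h2
      _ ≤ 26 * N ^ 26 := Nat.le_mul_of_pos_left _ (by norm_num)
  · have hm1 : 1 ≤ m := Nat.one_le_iff_ne_zero.mpr hm0
    have hk1 : k + 1 ≤ (k + 1) ^ m := Nat.le_self_pow hm0 _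
    have hkB : k + 1 ≤ B := le_trans hk1 (Nat.le_mul_of_pos_left _ hm1)
    have hmB : m ≤ B := Nat.le_mul_of_pos_right m (pow_pos (by omega) m)
    have hNge2 : 2 ≤ N := by omega
    have hNN2 : N ≤ N ^ 2 := by nlinarith
    have hNN3 : N ^ 2 ≤ N ^ 3 := by nlinarith
    have hterm : ∀ q : Q, (termF A q).gsize ≤ 6 * N ^ 2 := by
      intro q
      calc (termF A q).gsize ≤ 2 + A2 * (3 * a + 5) := gsize_termF A q
        _ ≤ 2 + N * (5 * N) := by
            have h1 : 3 * a + 5 ≤ 5 * N := by omega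
            exact Nat.add_le_add_left (Nat.mul_le_mul hAN h1) 2
        _ = 5 * N ^ 2 + 2 := by ring
        _ ≤ 6 * N ^ 2 := by nlinarith
    have hiter : ∀ q : Q, (iterSch A k q).gsize ≤ 14 * N ^ 3 := by
      intro q
      have h1 : 2 * k + 6 ≤ 6 * N := by omega
      have h2 : m * (2 * k + 6) ≤ 6 * N ^ 2 := by
        calc m * (2 * k + 6) ≤ N * (6 * N) := Nat.mul_le_mul (hmB.trans hBN) h1
          _ = 6 * N ^ 2 := by ring
      have h3 : 7 + m * (2 * k + 6) ≤ 13 * N ^ 2 := by nlinarith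
      calc (iterSch A k q).gsize ≤ 2 + B * (7 + m * (2 * k + 6)) := gsize_iterSch A k q
        _ ≤ 2 + N * (13 * N ^ 2) := Nat.add_le_add_left (Nat.mul_le_mul hBN h3) 2
        _ = 13 * N ^ 3 + 2 := by ring
        _ ≤ 14 * N ^ 3 := by nlinarith
    have hsum : ∑ X : Q, ((termF A X).gsize + (iterSch A k X).gsize)
        ≤ m * (20 * N ^ 3) := by
      calc ∑ X : Q, ((termF A X).gsize + (iterSch A k X).gsize)
          ≤ ∑ _X : Q, (20 * N ^ 3) := by
            apply Finset.sum_le_sum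
            intro q _
            have h1 := hterm q
            have h2 := hiter q
            have h3 : 6 * N ^ 2 ≤ 6 * N ^ 3 := by omega
            omega
        _ = m * (20 * N ^ 3) := by rw [Finset.sum_const, smul_eq_mul, Finset.card_univ, ← hm]
    have hNN4 : N ≤ N ^ 4 := by nlinarith
    have h46 : N ^ 4 ≤ N ^ 26 := Nat.pow_le_pow_right (by omega) (by norm_num)
    calc progSize (buildProg A k)
        = a + ∑ X : Q, ((termF A X).gsize + (iterSch A k X).gsize) := hprog
      _ ≤ N + N * (20 * N ^ 3) := by
          have h1 : a ≤ N := by omega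
          have h2 : m * (20 * N ^ 3) ≤ N * (20 * N ^ 3) :=
            Nat.mul_le_mul_right _ (hmB.trans hBN)
          omega
      _ = N + 20 * N ^ 4 := by ring
      _ ≤ 21 * N ^ 4 := by nlinarith
      _ ≤ 26 * N ^ 26 := by
          calc 21 * N ^ 4 ≤ 26 * N ^ 4 := Nat.mul_le_mul_right _ (by norm_num)
            _ ≤ 26 * N ^ 26 := Nat.mul_le_mul_left _ h46
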